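/- Let T be a locally finite tree, f a parabolic self-embedding of T preserving the maximal ray R_f forward, and suppose every branch T^f_r (r ∈ R_f) is nearly finite. If some vertex of T has degree at least 3, then every non-elliptic self-embedding g of T satisfies g⁺ = f⁺, i.e., all non-elliptic embeddings of T have the same direction as f. -/

import Mathlib

/-- A ray in a graph. -/
def IsRay {V : Type*} (G : SimpleGraph V) (r : ℕ → V) : Prop :=
  Function.Injective r ∧ ∀ n, G.Adj (r n) (r (n + 1))

/-- A set of vertices is (the vertex set of) a ray. -/
def IsRaySet {V : Type*} (G : SimpleGraph V) (s : Set V) : Prop :=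
  ∃ r : ℕ → V, IsRay G r ∧ Set.range r = s

/-- Two rays are equivalent (belong to the same end) if their intersection is a ray. -/
def RayEquiv {V : Type*} (G : SimpleGraph V) (r₁ r₂ : ℕ → V) : Prop :=
  IsRaySet G (Set.range r₁ ∩ Set.range r₂)

/-- A self-embedding is elliptic if it fixes a nonempty finite subtree setwise. -/
def Elliptic {V : Type*} (G : SimpleGraph V) (f : G →g G) : Prop :=
  ∃ s : Set V, s.Nonempty ∧ s.Finite ∧ (G.induce s).Connected ∧ ⇑f '' s = s

/-- `f` fixes the end of the ray `ρ`: the image ray is equivalent to `ρ`. -/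
def FixesEnd {V : Type*} (G : SimpleGraph V) (f : G →g G) (ρ : ℕ → V) : Prop :=
  RayEquiv G (⇑f ∘ ρ) ρ

/-- A self-embedding is parabolic if it is not elliptic and fixes exactly one end. -/
def Parabolic {V : Type*} (G : SimpleGraph V) (f : G →g G) : Prop :=
  ¬ Elliptic G f ∧ ∃ ρ : ℕ → V, IsRay G ρ ∧ FixesEnd G f ρ ∧
    ∀ ρ' : ℕ → V, IsRay G ρ' → FixesEnd G f ρ' → RayEquiv G ρ ρ'

/-- `r` is the maximal ray mapped (properly) into itself by `f`. -/
def IsMaxPreservedRay {V : Type*} (G : SimpleGraph V) (f : G →g G) (r : ℕ → V) : Prop :=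
  IsRay G r ∧ ⇑f '' Set.range r ⊂ Set.range r ∧
    ∀ r' : ℕ → V, IsRay G r' → ⇑f '' Set.range r' ⊆ Set.range r' →
      Set.range r' ⊆ Set.range r

/-- The branch of the tree at the vertex `r i` of the ray `r`. -/
def BranchAt {V : Type*} (G : SimpleGraph V) (r : ℕ → V) (i : ℕ) : Set V :=
  {v | ∀ j, G.dist v (r j) = G.dist v (r i) + G.dist (r i) (r j)}

namespace TreeAux
open SimpleGraph Walk

variable {V : Type*} {G : SimpleGraph V}

/-- In a tree, any path has length equal to the distance between its ends. -/
lemma path_length_eq_dist (hG : G.IsTree) {u v : V} (p : G.Walk u v) (hp : p.IsPath) :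
    p.length = G.dist u v := by
  obtain ⟨q, hq, hql⟩ := hG.isConnected.exists_path_of_dist u v
  rw [(hG.existsUnique_path u v).unique hp hq]
  exact hql

lemma walk_eq_of_isPath (hG : G.IsTree) {u v : V} {p q : G.Walk u v} (hp : p.IsPath)
    (hq : q.IsPath) : p = q := (hG.existsUnique_path u v).unique hp hq

/-- Betweenness. -/
def TBtw (G : SimpleGraph V) (x y z : V) : Prop := G.dist x z = G.dist x y + G.dist y z

lemma btw_of_mem_support (hG : G.IsTree) {x z : V} {p : G.Walk x z} (hp : p.IsPath)
    {y : V} (hy : y ∈ p.support) : TBtw G x y z := by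
  classical
  have h1 := hp.takeUntil hy
  have h2 := hp.dropUntil hy
  have hsp := p.take_spec hy
  have hl : (p.takeUntil y hy).length + (p.dropUntil y hy).length = p.length := by
    rw [← length_append, hsp]
  rw [TBtw, ← path_length_eq_dist hG _ hp, ← path_length_eq_dist hG _ h1,
    ← path_length_eq_dist hG _ h2, hl]

lemma btw_self_left (x z : V) : TBtw G x x z := by
  simp [TBtw, SimpleGraph.dist_self]

lemma btw_self_right (x z : V) : TBtw G x z z := by
  simp [TBtw, SimpleGraph.dist_self]

lemma dist_eq_zero (hG : G.IsTree) {x y : V} (h : G.dist x y = 0) : x = y :=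
  (hG.isConnected.dist_eq_zero_iff).mp h

lemma btw_symm {x y z : V} (h : TBtw G x y z) : TBtw G z y x := by
  have h1 : G.dist z x = G.dist x z := SimpleGraph.dist_comm ..
  have h2 : G.dist z y = G.dist y z := SimpleGraph.dist_comm ..
  have h3 : G.dist y x = G.dist x y := SimpleGraph.dist_comm ..
  unfold TBtw at *
  omega

/-- Appending two paths whose supports meet only in the junction gives a path. -/
lemma isPath_append {x y z : V} {p : G.Walk x y} {q : G.Walk y z}
    (hp : p.IsPath) (hq : q.IsPath) (hmeet : ∀ u ∈ p.support, u ∈ q.support → u = y) :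
    (p.append q).IsPath := by
  rw [isPath_def, support_append, List.nodup_append]
  refine ⟨hp.support_nodup, hq.support_nodup.tail, ?_⟩
  intro u hu w hu' huw
  subst huw
  have hy := hmeet u hu (List.mem_of_mem_tail hu')
  have hcons : q.support = y :: q.support.tail := q.support_eq_cons
  have hnd := hq.support_nodup
  rw [hcons, List.nodup_cons] at hnd
  exact hnd.1 (hy ▸ hu')

lemma isPath_concat {x y z : V} {p : G.Walk x y} (hp : p.IsPath) (h : G.Adj y z)
    (hz : z ∉ p.support) : (p.concat h).IsPath := by
  rw [Walk.concat_eq_append]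
  refine isPath_append hp ?_ ?_
  · refine (Walk.IsPath.nil).cons ?_
    simp only [support_nil, List.mem_singleton]
    exact h.ne
  · intro u hu hu'
    simp only [support_cons, support_nil, List.mem_cons] at hu'
    rcases hu' with rfl | rfl | h0
    · rfl
    · exact absurd hu hz
    · exact absurd h0 (List.not_mem_nil (a := u))

/-- A chosen path between two vertices in a tree. -/
noncomputable def pathB (hG : G.IsTree) (x y : V) : G.Walk x y :=
  (hG.isConnected.exists_path_of_dist x y).choose

lemma pathB_isPath (hG : G.IsTree) (x y : V) : (pathB hG x y).IsPath :=
  (hG.isConnected.exists_path_of_dist x y).choose_spec.1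

lemma pathB_length (hG : G.IsTree) (x y : V) : (pathB hG x y).length = G.dist x y :=
  path_length_eq_dist hG _ (pathB_isPath hG x y)

/-- If `y` is between `x` and `z`, the two partial paths glue to a path. -/
lemma btw_append_isPath (hG : G.IsTree) {x y z : V} (h : TBtw G x y z) :
    ((pathB hG x y).append (pathB hG y z)).IsPath := by
  refine isPath_append (pathB_isPath hG x y) (pathB_isPath hG y z) ?_
  intro u hu hu'
  have h1 : TBtw G x u y := btw_of_mem_support hG (pathB_isPath hG x y) hu
  have h2 : TBtw G y u z := btw_of_mem_support hG (pathB_isPath hG y z) hu'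
  have htri : G.dist x z ≤ G.dist x u + G.dist u z := hG.isConnected.dist_triangle
  have hc : G.dist u y = G.dist y u := SimpleGraph.dist_comm ..
  unfold TBtw at *
  exact dist_eq_zero hG (by omega)

lemma btw_iff_mem_pathB (hG : G.IsTree) {x y z : V} :
    TBtw G x y z ↔ y ∈ (pathB hG x z).support := by
  constructor
  · intro h
    have hP := btw_append_isPath hG h
    have := walk_eq_of_isPath hG hP (pathB_isPath hG x z)
    rw [← this]
    rw [mem_support_append_iff]
    exact Or.inl (end_mem_support _)
  · exact fun h => btw_of_mem_support hG (pathB_isPath hG x z) h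

/-- Concatenation of geodesics: the gluing law. -/
lemma btw_glue (hG : G.IsTree) {x y z w : V} (h1 : TBtw G x y z) (h2 : TBtw G y z w)
    (hyz : G.dist y z ≠ 0) : TBtw G x z w := by
  have hP : ((pathB hG x z).append (pathB hG z w)).IsPath := by
    refine isPath_append (pathB_isPath hG x z) (pathB_isPath hG z w) ?_
    intro u hu hu'
    -- u is on path(x,z) and on path(z,w)
    have hxz : ((pathB hG x y).append (pathB hG y z)) = pathB hG x z :=
      walk_eq_of_isPath hG (btw_append_isPath hG h1) (pathB_isPath hG x z)
    rw [← hxz, mem_support_append_iff] at hu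
    rcases hu with hu | hu
    · -- u between x and y : metric contradiction unless dist y z = 0
      have h3 : TBtw G x u y := btw_of_mem_support hG (pathB_isPath hG x y) hu
      have h4 : TBtw G z u w := btw_of_mem_support hG (pathB_isPath hG z w) hu'
      have t1 : G.dist y w ≤ G.dist y u + G.dist u w := hG.isConnected.dist_triangle
      have t2 : G.dist y u ≤ G.dist y z + G.dist z u := hG.isConnected.dist_triangle
      have t3 : G.dist x z ≤ G.dist x u + G.dist u z := hG.isConnected.dist_triangle
      have c1 : G.dist u z = G.dist z u := SimpleGraph.dist_comm ..
      have c2 : G.dist u y = G.dist y u := SimpleGraph.dist_comm ..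
      unfold TBtw at *
      omega
    · -- u between y and z, and between z and w; use that path(y,w) is a path
      have hyw : ((pathB hG y z).append (pathB hG z w)).IsPath := btw_append_isPath hG h2
      have hxw : ((pathB hG y z).append (pathB hG z w)) = pathB hG y w :=
        walk_eq_of_isPath hG hyw (pathB_isPath hG y w)
      -- disjointness inside that path
      rw [isPath_def, support_append, List.nodup_append] at hyw
      by_contra hne
      have hu'' : u ∈ (pathB hG z w).support.tail := by
        have : (pathB hG z w).support = z :: (pathB hG z w).support.tail :=
          (pathB hG z w).support_eq_cons
        rw [this] at hu'
        rcases List.mem_cons.mp hu' with h | h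
        · exact absurd h hne
        · exact h
      exact hyw.2.2 u hu u hu'' rfl
  have hlen := path_length_eq_dist hG _ hP
  rw [length_append, pathB_length, pathB_length] at hlen
  exact hlen.symm

/-- For adjacent vertices, distances to any other vertex differ by exactly one. -/
lemma adj_dist_cases (hG : G.IsTree) {a b : V} (hab : G.Adj a b) (c : V) :
    G.dist a c = G.dist b c + 1 ∨ G.dist b c = G.dist a c + 1 := by
  classical
  have hd1 : G.dist a b = 1 := by
    rw [SimpleGraph.dist_eq_one_iff_adj]; exact hab
  by_cases h : a ∈ (pathB hG b c).support
  · right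
    have := btw_of_mem_support hG (pathB_isPath hG b c) h
    unfold TBtw at this
    have hc : G.dist b a = 1 := by rw [SimpleGraph.dist_comm]; exact hd1
    omega
  · left
    have hP : (Walk.cons hab (pathB hG b c)).IsPath := (pathB_isPath hG b c).cons h
    have := path_length_eq_dist hG _ hP
    rw [length_cons, pathB_length] at this
    omega

end TreeAux

namespace TreeAux2
open SimpleGraph Walk TreeAux

variable {V : Type*} {G : SimpleGraph V}

/-- Median / tripod lemma in a tree. -/
lemma exists_median (hG : G.IsTree) (x y z : V) :
    ∃ m, TBtw G x m y ∧ TBtw G x m z ∧ TBtw G y m z := by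
  classical
  -- strong induction on dist y z
  suffices H : ∀ n : ℕ, ∀ x y z : V, G.dist y z = n →
      ∃ m, TBtw G x m y ∧ TBtw G x m z ∧ TBtw G y m z from H (G.dist y z) x y z rfl
  intro n
  induction n using Nat.strong_induction_on with
  | _ n IH =>
    intro x y z hd
    rcases Nat.eq_zero_or_pos n with rfl | hpos
    · obtain rfl : y = z := dist_eq_zero hG hd
      exact ⟨y, btw_self_right x y, btw_self_right x y, btw_self_left y y⟩
    · -- take the second vertex on the path from y to z
      have hne : ¬ (pathB hG y z).Nil := by
        intro hnil
        have := pathB_length hG y z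
        rw [Walk.nil_iff_length_eq.mp hnil] at this
        omega
      obtain ⟨y', hadj, q, hq⟩ := Walk.not_nil_iff.mp hne
      have hqpath : q.IsPath := by
        have := pathB_isPath hG y z
        rw [hq] at this
        exact this.of_cons
      have hqlen : q.length = G.dist y' z := path_length_eq_dist hG q hqpath
      have hlen : G.dist y z = G.dist y' z + 1 := by
        have := pathB_length hG y z
        rw [hq, length_cons, hqlen] at this
        omega
      obtain ⟨m, hm1, hm2, hm3⟩ := IH (G.dist y' z) (by omega) x y' z (rfl)
      -- m is on the path from y to z
      have hmyz : TBtw G y m z := by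
        have hmem : m ∈ q.support := by
          have := btw_iff_mem_pathB hG |>.mp hm3
          have hq' : q = pathB hG y' z := walk_eq_of_isPath hG hqpath (pathB_isPath hG y' z)
          rw [hq']; exact this
        have : m ∈ (pathB hG y z).support := by
          rw [hq, support_cons]; exact List.mem_cons_of_mem _ hmem
        exact btw_of_mem_support hG (pathB_isPath hG y z) this
      have hdym : G.dist y m = G.dist y' m + 1 := by
        have c1 : G.dist m z = G.dist z m := SimpleGraph.dist_comm ..
        unfold TBtw at hm3 hmyz
        omega
      rcases adj_dist_cases hG hadj x with hcase | hcase
      · -- dist y x = dist y' x + 1 : m is the median for (x,y,z) as well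
        refine ⟨m, ?_, hm2, hmyz⟩
        unfold TBtw at *
        have c1 : G.dist x y' = G.dist y' x := SimpleGraph.dist_comm ..
        have c2 : G.dist x y = G.dist y x := SimpleGraph.dist_comm ..
        have c3 : G.dist m y = G.dist y m := SimpleGraph.dist_comm ..
        have c4 : G.dist m y' = G.dist y' m := SimpleGraph.dist_comm ..
        omega
      · -- dist y' x = dist y x + 1 : y between x and y' — median is y
        have hyy' : TBtw G x y y' := by
          unfold TBtw at *
          have c1 : G.dist x y' = G.dist y' x := SimpleGraph.dist_comm ..
          have c2 : G.dist x y = G.dist y x := SimpleGraph.dist_comm ..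
          have c3 : G.dist y y' = 1 := SimpleGraph.dist_eq_one_iff_adj.mpr hadj
          omega
        -- m is on path(x, y') = path(x,y) ++ edge
        have hW : ((pathB hG x y).concat hadj).IsPath := by
          apply isPath_concat (pathB_isPath hG x y)
          intro hmem
          have := btw_of_mem_support hG (pathB_isPath hG x y) hmem
          unfold TBtw at this hyy'
          have c3 : G.dist y y' = 1 := SimpleGraph.dist_eq_one_iff_adj.mpr hadj
          have c4 : G.dist y' y = 1 := by rw [SimpleGraph.dist_comm]; exact c3
          omega
        have hWeq : (pathB hG x y).concat hadj = pathB hG x y' :=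
          walk_eq_of_isPath hG hW (pathB_isPath hG x y')
        have hmmem : m ∈ ((pathB hG x y).concat hadj).support := by
          rw [hWeq, ← btw_iff_mem_pathB hG]; exact hm1
        rw [support_concat, List.mem_append] at hmmem
        rcases hmmem with hmm | hmm
        · -- contradiction
          exfalso
          have hxmy : TBtw G x m y := btw_of_mem_support hG (pathB_isPath hG x y) hmm
          unfold TBtw at hm1 hxmy hyy'
          have c1 : G.dist m y' = G.dist y' m := SimpleGraph.dist_comm ..
          have c2 : G.dist m y = G.dist y m := SimpleGraph.dist_comm ..
          have c3 : G.dist y y' = 1 := SimpleGraph.dist_eq_one_iff_adj.mpr hadj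
          omega
        · -- m = y', median is y
          have hmy' : m = y' := by simpa using hmm
          refine ⟨y, btw_self_right x y, ?_, btw_self_left y z⟩
          have hm2' : G.dist x z = G.dist x y' + G.dist y' z := by
            have h5 := hm2; rw [hmy'] at h5; exact h5
          have hx1 : G.dist x y' = G.dist y' x := SimpleGraph.dist_comm ..
          have hx2 : G.dist x y = G.dist y x := SimpleGraph.dist_comm ..
          show G.dist x z = G.dist x y + G.dist y z
          omega

end TreeAux2

namespace TreeAux3
open SimpleGraph Walk TreeAux TreeAux2

variable {V : Type*} {G : SimpleGraph V}

/-- The walk along a ray from index `i` to `i+j`. -/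
def rayWalk (ρ : ℕ → V) (h : ∀ n, G.Adj (ρ n) (ρ (n+1))) : (i j : ℕ) → G.Walk (ρ i) (ρ (i + j))
  | _, 0 => Walk.nil
  | i, j+1 => (Walk.cons (h i) (rayWalk ρ h (i+1) j)).copy rfl (congrArg ρ (by omega))

lemma rayWalk_length (ρ : ℕ → V) (h : ∀ n, G.Adj (ρ n) (ρ (n+1))) (i j : ℕ) :
    (rayWalk ρ h i j).length = j := by
  induction j generalizing i with
  | zero => simp [rayWalk]
  | succ j ih => simp [rayWalk, ih]

lemma rayWalk_support (ρ : ℕ → V) (h : ∀ n, G.Adj (ρ n) (ρ (n+1))) (i j : ℕ) :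
    (rayWalk ρ h i j).support = List.map ρ (List.range' i (j+1)) := by
  induction j generalizing i with
  | zero => simp [rayWalk, List.range'_succ]
  | succ j ih => simp [rayWalk, ih (i+1), List.range'_succ]

lemma rayWalk_isPath {ρ : ℕ → V} (hinj : Function.Injective ρ)
    (h : ∀ n, G.Adj (ρ n) (ρ (n+1))) (i j : ℕ) : (rayWalk ρ h i j).IsPath := by
  rw [isPath_def, rayWalk_support]
  exact (List.nodup_range' (s := i) (n := j+1)).map hinj

lemma ray_dist (hG : G.IsTree) {ρ : ℕ → V} (hinj : Function.Injective ρ)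
    (hadj : ∀ n, G.Adj (ρ n) (ρ (n+1))) {i j : ℕ} (hij : i ≤ j) :
    G.dist (ρ i) (ρ j) = j - i := by
  have hco : i + (j - i) = j := by omega
  have hp : ((rayWalk ρ hadj i (j-i)).copy rfl (congrArg ρ hco)).IsPath :=
    (isPath_copy _ rfl (congrArg ρ hco)).mpr (rayWalk_isPath hinj hadj i (j-i))
  have := path_length_eq_dist hG _ hp
  rw [length_copy, rayWalk_length] at this
  omega

lemma ray_adj (hG : G.IsTree) {ρ : ℕ → V} (hinj : Function.Injective ρ)
    (hadj : ∀ n, G.Adj (ρ n) (ρ (n+1))) {a b : ℕ} (h : G.Adj (ρ a) (ρ b)) :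
    b = a + 1 ∨ a = b + 1 := by
  have h1 : G.dist (ρ a) (ρ b) = 1 := SimpleGraph.dist_eq_one_iff_adj.mpr h
  rcases le_total a b with hab | hab
  · left
    have := ray_dist hG hinj hadj hab
    omega
  · right
    have := ray_dist hG hinj hadj hab
    have hc : G.dist (ρ b) (ρ a) = G.dist (ρ a) (ρ b) := SimpleGraph.dist_comm ..
    omega

lemma pathB_ray_support_le (hG : G.IsTree) {r : ℕ → V} (hinj : Function.Injective r)
    (hadj : ∀ n, G.Adj (r n) (r (n+1))) {i j : ℕ} (hij : i ≤ j) {c : V}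
    (hc : c ∈ (pathB hG (r i) (r j)).support) : ∃ k, c = r k := by
  have hco : i + (j - i) = j := by omega
  have heq : (rayWalk r hadj i (j-i)).copy rfl (congrArg r hco) = pathB hG (r i) (r j) :=
    walk_eq_of_isPath hG
      ((isPath_copy _ rfl (congrArg r hco)).mpr (rayWalk_isPath hinj hadj i (j-i)))
      (pathB_isPath hG _ _)
  rw [← heq, support_copy, rayWalk_support] at hc
  obtain ⟨s, -, hs⟩ := List.mem_map.mp hc
  exact ⟨s, hs.symm⟩

lemma pathB_ray_support (hG : G.IsTree) {r : ℕ → V} (hinj : Function.Injective r)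
    (hadj : ∀ n, G.Adj (r n) (r (n+1))) (i j : ℕ) {c : V}
    (hc : c ∈ (pathB hG (r i) (r j)).support) : ∃ k, c = r k := by
  rcases le_total i j with hij | hij
  · exact pathB_ray_support_le hG hinj hadj hij hc
  · have heq : (pathB hG (r j) (r i)).reverse = pathB hG (r i) (r j) :=
      walk_eq_of_isPath hG ((pathB_isPath hG (r j) (r i)).reverse) (pathB_isPath hG _ _)
    rw [← heq, support_reverse, List.mem_reverse] at hc
    exact pathB_ray_support_le hG hinj hadj hij hc

end TreeAux3

namespace TreeAux4
open SimpleGraph Walk TreeAux TreeAux2 TreeAux3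

variable {V : Type*} {G : SimpleGraph V}

lemma exists_gate (hG : G.IsTree) {r : ℕ → V} (hinj : Function.Injective r)
    (hadj : ∀ n, G.Adj (r n) (r (n+1))) (w : V) :
    ∃ i, ∀ j, G.dist w (r j) = G.dist w (r i) + G.dist (r i) (r j) := by
  have hne : (Set.range fun j => G.dist w (r j)).Nonempty := ⟨G.dist w (r 0), 0, rfl⟩
  obtain ⟨i, hi⟩ := Nat.sInf_mem hne
  refine ⟨i, fun j => ?_⟩
  obtain ⟨c, h1, h2, h3⟩ := exists_median hG w (r i) (r j)
  have hc : c ∈ (pathB hG (r i) (r j)).support := (btw_iff_mem_pathB hG).mp h3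
  obtain ⟨k, rfl⟩ := pathB_ray_support hG hinj hadj i j hc
  have hmin : sInf (Set.range fun j => G.dist w (r j)) ≤ G.dist w (r k) :=
    Nat.sInf_le ⟨k, rfl⟩
  have h1' : G.dist w (r i) = G.dist w (r k) + G.dist (r k) (r i) := h1
  have hi' : G.dist w (r i) = sInf (Set.range fun j => G.dist w (r j)) := hi
  have hzero : G.dist (r k) (r i) = 0 := by omega
  have hki : r k = r i := dist_eq_zero hG hzero
  have h2' : G.dist w (r j) = G.dist w (r k) + G.dist (r k) (r j) := h2
  rw [hki] at h2'
  exact h2'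

lemma branch_of_btw (hG : G.IsTree) {r : ℕ → V} {i : ℕ} {w z : V}
    (hw : w ∈ BranchAt G r i) (hz : TBtw G w z (r i)) : z ∈ BranchAt G r i := by
  intro j
  have hwj := hw j
  have hz' : G.dist w (r i) = G.dist w z + G.dist z (r i) := hz
  have t1 : G.dist w (r j) ≤ G.dist w z + G.dist z (r j) := hG.isConnected.dist_triangle
  have t2 : G.dist z (r j) ≤ G.dist z (r i) + G.dist (r i) (r j) := hG.isConnected.dist_triangle
  show G.dist z (r j) = G.dist z (r i) + G.dist (r i) (r j)
  omega

lemma branch_of_near (hG : G.IsTree) {r : ℕ → V} {i : ℕ} {w z : V}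
    (hw : w ∈ BranchAt G r i) (hclose : G.dist w z < G.dist w (r i)) :
    z ∈ BranchAt G r i := by
  obtain ⟨m, h1, h2, h3⟩ := exists_median hG z w (r i)
  have hm : m ∈ BranchAt G r i := branch_of_btw hG hw h3
  have hmne : G.dist m (r i) ≠ 0 := by
    have h1' : G.dist z w = G.dist z m + G.dist m w := h1
    have h3' : G.dist w (r i) = G.dist w m + G.dist m (r i) := h3
    have c1 : G.dist z w = G.dist w z := SimpleGraph.dist_comm ..
    have c2 : G.dist m w = G.dist w m := SimpleGraph.dist_comm ..
    omega
  intro j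
  exact btw_glue hG h2 (hm j) hmne

lemma branch_step (hG : G.IsTree) {r : ℕ → V} (hinj : Function.Injective r)
    (hadj : ∀ n, G.Adj (r n) (r (n+1))) {i : ℕ} {x y : V}
    (hx : x ∈ BranchAt G r i) (hxy : G.Adj x y) (hy : y ∉ Set.range r) :
    y ∈ BranchAt G r i := by
  have hxy1 : G.dist x y = 1 := SimpleGraph.dist_eq_one_iff_adj.mpr hxy
  rcases adj_dist_cases hG hxy (r i) with hcase | hcase
  · exact branch_of_btw hG hx
      (show G.dist x (r i) = G.dist x y + G.dist y (r i) by omega)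
  · by_cases hxri : G.dist x (r i) = 0
    · have hxeq : x = r i := dist_eq_zero hG hxri
      obtain ⟨k, hk⟩ := exists_gate hG hinj hadj y
      have hk1 := hk i
      have hyri : G.dist y (r i) = 1 := by
        have cc : G.dist y x = G.dist x y := SimpleGraph.dist_comm ..
        rw [hxeq] at hxy1
        omega
      have hyk : G.dist y (r k) ≠ 0 := fun h0 => hy ⟨k, (dist_eq_zero hG h0).symm⟩
      have hzero : G.dist (r k) (r i) = 0 := by omega
      have hki : r k = r i := dist_eq_zero hG hzero
      intro j
      have hkj := hk j
      rw [hki] at hkj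
      exact hkj
    · have hbx : TBtw G y x (r i) := by
        have cc : G.dist y x = G.dist x y := SimpleGraph.dist_comm ..
        show G.dist y (r i) = G.dist y x + G.dist x (r i)
        omega
      intro j
      exact btw_glue hG hbx (hx j) hxri

lemma hom_dist (hG : G.IsTree) (g : G →g G) (hg : Function.Injective ⇑g) (u v : V) :
    G.dist (g u) (g v) = G.dist u v := by
  have hp := pathB_isPath hG u v
  have hmap : ((pathB hG u v).map g).IsPath := Walk.map_isPath_of_injective hg hp
  have := path_length_eq_dist hG _ hmap
  rw [Walk.length_map, pathB_length] at this
  exact this.symm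

lemma hom_degree_le [∀ v, Fintype (G.neighborSet v)] (g : G →g G)
    (hg : Function.Injective ⇑g) (v : V) : G.degree v ≤ G.degree (g v) := by
  classical
  have himg : (G.neighborFinset v).image g ⊆ G.neighborFinset (g v) := by
    intro u hu
    obtain ⟨w, hw, rfl⟩ := Finset.mem_image.mp hu
    rw [SimpleGraph.mem_neighborFinset] at hw ⊢
    exact g.map_adj hw
  calc G.degree v = (G.neighborFinset v).card := rfl
    _ = ((G.neighborFinset v).image g).card := (Finset.card_image_of_injective _ hg).symm
    _ ≤ (G.neighborFinset (g v)).card := Finset.card_le_card himg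
    _ = G.degree (g v) := rfl

lemma shift_exists (hG : G.IsTree) {g : G →g G} (hg : Function.Injective ⇑g)
    {ρ : ℕ → V} (hinj : Function.Injective ρ) (hadj : ∀ n, G.Adj (ρ n) (ρ (n+1)))
    (hsub : ⇑g '' Set.range ρ ⊆ Set.range ρ) :
    ∃ t, ∀ n, g (ρ n) = ρ (n + t) := by
  have hchoice : ∀ n : ℕ, ∃ m, g (ρ n) = ρ m := by
    intro n
    obtain ⟨m, hm⟩ := hsub ⟨ρ n, ⟨n, rfl⟩, rfl⟩
    exact ⟨m, hm.symm⟩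
  choose σ hσ using hchoice
  have hσinj : Function.Injective σ := by
    intro a b hab
    have h1 : g (ρ a) = g (ρ b) := by rw [hσ, hσ, hab]
    exact hinj (hg h1)
  have hstep : ∀ n, σ (n+1) = σ n + 1 ∨ σ n = σ (n+1) + 1 := by
    intro n
    have hadj' : G.Adj (ρ (σ n)) (ρ (σ (n+1))) := by
      rw [← hσ, ← hσ]
      exact g.map_adj (hadj n)
    exact ray_adj hG hinj hadj hadj'
  have hmono : ∀ n, σ (n+1) = σ n + 1 := by
    by_contra hcon
    push_neg at hcon
    obtain ⟨n₀, hn₀⟩ := hcon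
    have h0 : σ n₀ = σ (n₀+1) + 1 := (hstep n₀).resolve_left hn₀
    have hdec : ∀ s, σ (n₀ + s) = σ (n₀ + s + 1) + 1 := by
      intro s
      induction s with
      | zero => exact h0
      | succ s ih =>
        rcases hstep (n₀ + s + 1) with h | h
        · exfalso
          have heq : σ (n₀ + s + 1 + 1) = σ (n₀ + s) := by omega
          have := hσinj heq
          omega
        · exact h
    have hlow : ∀ s, σ (n₀ + s) + s ≤ σ n₀ := by
      intro s
      induction s with
      | zero => simp
      | succ s ih =>
        have h1 := hdec s
        have he : n₀ + (s+1) = n₀ + s + 1 := rfl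
        rw [he]
        omega
    have := hlow (σ n₀ + 1)
    omega
  have hlin : ∀ n, σ n = σ 0 + n := by
    intro n
    induction n with
    | zero => exact (Nat.add_zero _).symm
    | succ n ih =>
      rw [hmono n, ih]
      omega
  refine ⟨σ 0, fun n => ?_⟩
  rw [hσ n]
  have h2 := hlin n
  exact congrArg ρ (by omega)

lemma rayEquiv_of_unbounded_hits (hG : G.IsTree) {ρ r : ℕ → V}
    (hρi : Function.Injective ρ) (hρa : ∀ n, G.Adj (ρ n) (ρ (n+1)))
    (hri : Function.Injective r) (hra : ∀ n, G.Adj (r n) (r (n+1)))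
    (hinf : ∀ K : ℕ, ∃ n, K ≤ n ∧ ρ n ∈ Set.range r) :
    IsRaySet G (Set.range ρ ∩ Set.range r) := by
  classical
  have hex : ∃ n, ρ n ∈ Set.range r := by
    obtain ⟨n, -, h⟩ := hinf 0
    exact ⟨n, h⟩
  obtain ⟨m₁, hm₁⟩ := Nat.find_spec hex
  set n₁ := Nat.find hex with hn₁def
  have key : ∀ s, ρ (n₁ + s) = r (m₁ + s) := by
    intro s
    obtain ⟨n₂, hn₂, m₂, hm₂⟩ : ∃ n₂, n₁ + m₁ + s + 1 ≤ n₂ ∧ ∃ m₂, r m₂ = ρ n₂ :=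
      hinf (n₁ + m₁ + s + 1)
    have hL : G.dist (ρ n₁) (ρ n₂) = n₂ - n₁ := ray_dist hG hρi hρa (by omega)
    have hm2 : m₂ = m₁ + (n₂ - n₁) := by
      rw [← hm₁, ← hm₂] at hL
      rcases le_total m₁ m₂ with h | h
      · have := ray_dist hG hri hra h
        omega
      · have h5 := ray_dist hG hri hra h
        have cc : G.dist (r m₂) (r m₁) = G.dist (r m₁) (r m₂) := SimpleGraph.dist_comm ..
        omega
    set L := n₂ - n₁ with hLdef
    have he2 : ρ (n₁ + L) = r (m₁ + L) := by
      have h6 : n₁ + L = n₂ := by omega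
      rw [h6, ← hm₂, hm2]
    have heq : ((rayWalk ρ hρa n₁ L).copy hm₁.symm he2) = rayWalk r hra m₁ L :=
      walk_eq_of_isPath hG ((isPath_copy _ _ _).mpr (rayWalk_isPath hρi hρa n₁ L))
        (rayWalk_isPath hri hra m₁ L)
    have hsup := congrArg Walk.support heq
    rw [support_copy, rayWalk_support, rayWalk_support] at hsup
    have hsL : s < (List.map ρ (List.range' n₁ (L+1))).length := by
      simp
      omega
    have h3 := List.getElem_of_eq hsup hsL
    simpa using h3
  have hset : Set.range ρ ∩ Set.range r = Set.range (fun s => r (m₁ + s)) := by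
    ext x
    constructor
    · rintro ⟨⟨n, rfl⟩, ⟨m, hm⟩⟩
      rcases le_or_gt n₁ n with hn | hn
      · refine ⟨n - n₁, ?_⟩
        show r (m₁ + (n - n₁)) = ρ n
        rw [← key (n - n₁)]
        exact congrArg ρ (by omega)
      · exact absurd ⟨m, hm⟩ (Nat.find_min hex hn)
    · rintro ⟨s, rfl⟩
      exact ⟨⟨n₁ + s, key s⟩, ⟨m₁ + s, rfl⟩⟩
  rw [hset]
  refine ⟨fun s => r (m₁ + s), ⟨?_, fun n => ?_⟩, rfl⟩
  · intro a b hab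
    have := hri hab
    omega
  · exact hra (m₁ + n)

end TreeAux4

open TreeAux TreeAux2 TreeAux3 TreeAux4 SimpleGraph

/-- Let `f` be a parabolic self-embedding of a locally finite tree with maximal ray
`r`, all branches along `r` nearly finite, and suppose some vertex has degree ≥ 3.
Then every non-elliptic self-embedding `g` has the same direction as `f`: every ray
preserved forward by `g` is equivalent to `r`. -/
theorem stmt_16 {V : Type*} (G : SimpleGraph V)
    (hG : G.IsTree) [∀ v, Fintype (G.neighborSet v)]
    (f : G →g G) (hf : Function.Injective f) (hpar : Parabolic G f)
    (r : ℕ → V) (hmax : IsMaxPreservedRay G f r)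
    (hnf : ∀ i, {v ∈ BranchAt G r i | 3 ≤ G.degree v}.Finite)
    (hdeg : ∃ v, 3 ≤ G.degree v) :
    ∀ g : G →g G, Function.Injective g → ¬ Elliptic G g →
      ∀ ρ : ℕ → V, IsRay G ρ → ⇑g '' Set.range ρ ⊆ Set.range ρ →
        RayEquiv G ρ r := by
  classical
  obtain ⟨v, hv3⟩ := hdeg
  obtain ⟨hrinj, hradj⟩ := hmax.1
  intro g hg hgell ρ hρ hgρ
  obtain ⟨hρinj, hρadj⟩ := hρ
  by_contra hcon
  -- ρ eventually avoids r
  have hfin : ∃ N, ∀ n, N ≤ n → ρ n ∉ Set.range r := by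
    by_contra hc
    push_neg at hc
    exact hcon (rayEquiv_of_unbounded_hits hG hρinj hρadj hrinj hradj hc)
  obtain ⟨N, hN⟩ := hfin
  obtain ⟨t, hshift⟩ := shift_exists hG hg hρinj hρadj hgρ
  have ht1 : 1 ≤ t := by
    rcases Nat.eq_zero_or_pos t with rfl | h
    · exfalso
      apply hgell
      refine ⟨{ρ 0}, ⟨ρ 0, rfl⟩, Set.finite_singleton _, ?_, ?_⟩
      · rw [SimpleGraph.connected_iff]
        refine ⟨?_, ⟨⟨ρ 0, rfl⟩⟩⟩
        rintro ⟨a, ha⟩ ⟨b, hb⟩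
        simp only [Set.mem_singleton_iff] at ha hb
        subst ha
        subst hb
        exact Reachable.refl _
      · rw [Set.image_singleton]
        have h0 : g (ρ 0) = ρ 0 := by simpa using hshift 0
        rw [h0]
    · exact h
  obtain ⟨i, hgate⟩ := exists_gate hG hrinj hradj (ρ N)
  have hbase : ρ N ∈ BranchAt G r i := hgate
  have hbranch : ∀ m, N ≤ m → ρ m ∈ BranchAt G r i := by
    intro m hm
    induction m, hm using Nat.le_induction with
    | base => exact hbase
    | succ m hm ih =>
      exact branch_step hG hrinj hradj ih (hρadj m) (hN (m+1) (by omega))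
  set w : ℕ → V := fun n => (⇑g)^[n] v with hw
  have hwd : ∀ n, G.dist (w n) (ρ (n * t)) = G.dist v (ρ 0) := by
    intro n
    induction n with
    | zero => simp [hw]
    | succ n ih =>
      have e1 : w (n+1) = g (w n) := by
        simp [hw, Function.iterate_succ_apply']
      have e2 : ρ ((n+1) * t) = g (ρ (n * t)) := by
        rw [hshift (n * t)]
        exact congrArg ρ (by ring)
      rw [e1, e2, hom_dist hG g hg]
      exact ih
  have hwdeg : ∀ n, 3 ≤ G.degree (w n) := by
    intro n
    induction n with
    | zero => exact hv3
    | succ n ih =>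
      have e1 : w (n+1) = g (w n) := by simp [hw, Function.iterate_succ_apply']
      rw [e1]
      exact le_trans ih (hom_degree_le g hg (w n))
  obtain ⟨B, hB⟩ : ∃ B, ∀ u ∈ {v ∈ BranchAt G r i | 3 ≤ G.degree v},
      G.dist u (r i) ≤ B := by
    have hfin2 := ((hnf i).image (fun u => G.dist u (r i)))
    obtain ⟨B, hB⟩ := hfin2.bddAbove
    exact ⟨B, fun u hu => hB (Set.mem_image_of_mem _ hu)⟩
  set D := G.dist v (ρ 0) with hD
  set c := G.dist (ρ N) (r i) with hc
  set n := N + c + D + B + 2 with hn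
  have hnt : n ≤ n * t := by
    have h7 := Nat.mul_le_mul (le_refl n) ht1
    simpa using h7
  have hdist0 : G.dist (ρ N) (ρ (n*t)) = n*t - N := ray_dist hG hρinj hρadj (by omega)
  have htri : G.dist (ρ N) (ρ (n*t)) ≤ G.dist (ρ N) (r i) + G.dist (r i) (ρ (n*t)) :=
    hG.isConnected.dist_triangle
  have hcomm : G.dist (r i) (ρ (n*t)) = G.dist (ρ (n*t)) (r i) := SimpleGraph.dist_comm ..
  have hdepth : D + B + 2 ≤ G.dist (ρ (n*t)) (r i) := by omega
  have hρn : ρ (n*t) ∈ BranchAt G r i := hbranch (n*t) (by omega)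
  have hwdist : G.dist (ρ (n*t)) (w n) = D := by
    rw [SimpleGraph.dist_comm]
    exact hwd n
  have hwB : w n ∈ BranchAt G r i := branch_of_near hG hρn (by omega)
  have htri2 : G.dist (ρ (n*t)) (r i) ≤ G.dist (ρ (n*t)) (w n) + G.dist (w n) (r i) :=
    hG.isConnected.dist_triangle
  have hfinal := hB (w n) ⟨hwB, hwdeg n⟩
  omega
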